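/- Let p* be the unique minimizer of f(p) = Σ_{i=1}^n f_i(p_i) subject to 1_n^⊤ p = c, and let p^0 satisfy 1_n^⊤ p^0 = c. Then under the discretized Laplacian-flow iteration p^{k+1} = p^k − η L ∇f(p^k) with step size 0 < η < 2/(θ λ_n), where θ = max_i θ_i, the sequence (p^k) converges asymptotically to p*. -/

import Mathlib

open Filter Matrix

private lemma lf_slope_le {φ : ℝ → ℝ} (hφ' : Differentiable ℝ (deriv φ))
    {K : ℝ} (hK : ∀ s, deriv (deriv φ) s ≤ K) {x y : ℝ} (hxy : x < y) :
    deriv φ y - deriv φ x ≤ K * (y - x) := by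
  obtain ⟨ξ, _, hξ⟩ := exists_deriv_eq_slope (deriv φ) hxy
    (hφ'.continuous.continuousOn) (hφ'.differentiableOn)
  have h := hK ξ
  rw [hξ] at h
  have hyx : 0 < y - x := by linarith
  calc deriv φ y - deriv φ x = (deriv φ y - deriv φ x) / (y - x) * (y - x) := by
        field_simp
    _ ≤ K * (y - x) := mul_le_mul_of_nonneg_right h hyx.le

private lemma lf_taylor_upper {φ : ℝ → ℝ} (hφ : Differentiable ℝ φ)
    (hφ' : Differentiable ℝ (deriv φ)) {K : ℝ}
    (hK : ∀ s, deriv (deriv φ) s ≤ K) (a b : ℝ) :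
    φ b ≤ φ a + deriv φ a * (b - a) + K / 2 * (b - a) ^ 2 := by
  set u : ℝ → ℝ := fun x => φ a + deriv φ a * (x - a) + K / 2 * (x - a) ^ 2 - φ x with hu
  have hu' : ∀ x, HasDerivAt u (deriv φ a + K * (x - a) - deriv φ x) x := by
    intro x
    have h1 : HasDerivAt (fun x : ℝ => x - a) 1 x := (hasDerivAt_id x).sub_const a
    have h2 : HasDerivAt (fun x : ℝ => φ a + deriv φ a * (x - a) + K / 2 * (x - a) ^ 2)
        (deriv φ a + K * (x - a)) x := by
      have h3 := (h1.const_mul (deriv φ a)).const_add (φ a)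
      have h4 := (h1.fun_pow 2).const_mul (K / 2)
      refine (h3.fun_add h4).congr_deriv ?_
      norm_num
      ring
    exact h2.sub (hφ x).hasDerivAt
  have hud : Differentiable ℝ u := fun x => (hu' x).differentiableAt
  have hderiv : ∀ x, deriv u x = deriv φ a + K * (x - a) - deriv φ x := fun x => (hu' x).deriv
  have hua : u a = 0 := by simp [hu]
  have key : 0 ≤ u b := by
    rcases le_or_gt a b with hab | hab
    · have hmono : MonotoneOn u (Set.Icc a b) := by
        apply monotoneOn_of_deriv_nonneg (convex_Icc a b) hud.continuous.continuousOn
          hud.differentiableOn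
        intro x hx
        rw [interior_Icc] at hx
        rw [hderiv]
        have := lf_slope_le hφ' hK hx.1
        linarith
      have h := hmono (Set.left_mem_Icc.mpr hab) (Set.mem_Icc.mpr ⟨hab, le_rfl⟩) hab
      linarith
    · have hanti : AntitoneOn u (Set.Icc b a) := by
        apply antitoneOn_of_deriv_nonpos (convex_Icc b a) hud.continuous.continuousOn
          hud.differentiableOn
        intro x hx
        rw [interior_Icc] at hx
        rw [hderiv]
        have := lf_slope_le hφ' hK hx.2
        linarith
      have h := hanti (Set.mem_Icc.mpr ⟨le_rfl, hab.le⟩) (Set.right_mem_Icc.mpr hab.le) hab.le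
      linarith
  simp only [hu] at key
  linarith

private lemma lf_taylor_lower {φ : ℝ → ℝ} (hφ : Differentiable ℝ φ)
    (hφ' : Differentiable ℝ (deriv φ)) {m : ℝ}
    (hm : ∀ s, m ≤ deriv (deriv φ) s) (a b : ℝ) :
    φ a + deriv φ a * (b - a) + m / 2 * (b - a) ^ 2 ≤ φ b := by
  have hdneg : deriv (fun x => -φ x) = fun x => -deriv φ x := funext fun x => deriv.neg
  have hφn : Differentiable ℝ (fun x => -φ x) := hφ.neg
  have hφn' : Differentiable ℝ (deriv fun x => -φ x) := by rw [hdneg]; exact hφ'.neg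
  have hK : ∀ s, deriv (deriv fun x => -φ x) s ≤ -m := by
    intro s
    rw [hdneg]
    have h : deriv (fun x => -deriv φ x) s = -deriv (deriv φ) s := deriv.neg
    rw [h]
    linarith [hm s]
  have h := lf_taylor_upper hφn hφn' hK a b
  rw [hdneg] at h
  simp only at h
  linarith

private lemma symm_dot {n : ℕ} {A : Matrix (Fin n) (Fin n) ℝ} (hA : Aᵀ = A)
    (u v : Fin n → ℝ) : u ⬝ᵥ (A *ᵥ v) = (A *ᵥ u) ⬝ᵥ v := by
  rw [Matrix.dotProduct_mulVec, ← Matrix.mulVec_transpose, hA]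

private lemma lambda2_bound {n : ℕ} (hn : 2 ≤ n) (L : Matrix (Fin n) (Fin n) ℝ)
    (hLnn : ∀ v : Fin n → ℝ, 0 ≤ v ⬝ᵥ (L *ᵥ v))
    (hker0 : ∀ v : Fin n → ℝ, v ⬝ᵥ (L *ᵥ v) = 0 → L *ᵥ v = 0)
    (hLker : ∀ v : Fin n → ℝ, L *ᵥ v = 0 → ∃ c : ℝ, v = fun _ => c) :
    ∃ m : ℝ, 0 < m ∧ ∀ v : Fin n → ℝ, (∑ i, v i) = 0 → m * (v ⬝ᵥ v) ≤ v ⬝ᵥ (L *ᵥ v) := by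
  set S : Set (Fin n → ℝ) := {v | (∑ i, v i) = 0 ∧ v ⬝ᵥ v = 1} with hS
  have hcont_sum : Continuous fun v : Fin n → ℝ => ∑ i, v i :=
    continuous_finset_sum _ fun i _ => continuous_apply i
  have hcont_dot : Continuous fun v : Fin n → ℝ => v ⬝ᵥ v := by
    show Continuous fun v : Fin n → ℝ => ∑ i, v i * v i
    exact continuous_finset_sum _ fun i _ => (continuous_apply i).mul (continuous_apply i)
  have hcont_R : Continuous fun v : Fin n → ℝ => v ⬝ᵥ (L *ᵥ v) := by
    show Continuous fun v : Fin n → ℝ => ∑ i, v i * ∑ j, L i j * v j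
    exact continuous_finset_sum _ fun i _ => (continuous_apply i).mul
      (continuous_finset_sum _ fun j _ => continuous_const.mul (continuous_apply j))
  have hSc : IsClosed S := by
    have h1 : IsClosed {v : Fin n → ℝ | (∑ i, v i) = 0} := isClosed_eq hcont_sum continuous_const
    have h2 : IsClosed {v : Fin n → ℝ | v ⬝ᵥ v = 1} := isClosed_eq hcont_dot continuous_const
    exact h1.inter h2
  have hSb : Bornology.IsBounded S := by
    apply Bornology.IsBounded.subset (Metric.isBounded_closedBall (x := (0 : Fin n → ℝ)) (r := 1))
    intro v hv
    rw [Metric.mem_closedBall, dist_zero_right]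
    rw [pi_norm_le_iff_of_nonneg (by norm_num)]
    intro i
    rw [Real.norm_eq_abs, abs_le_one_iff_mul_self_le_one]
    calc v i * v i ≤ ∑ j, v j * v j :=
          Finset.single_le_sum (fun j _ => mul_self_nonneg (v j)) (Finset.mem_univ i)
      _ = 1 := hv.2
  have hScomp : IsCompact S := Metric.isCompact_of_isClosed_isBounded hSc hSb
  -- nonempty
  have hne : S.Nonempty := by
    have h0n : 0 < n := by omega
    have h1n : 1 < n := by omega
    set i0 : Fin n := ⟨0, h0n⟩ with hi0
    set i1 : Fin n := ⟨1, h1n⟩ with hi1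
    have h01 : i0 ≠ i1 := by
      simp [hi0, hi1, Fin.ext_iff]
    set w : Fin n → ℝ := fun j =>
      (if j = i0 then (1:ℝ) else 0) - (if j = i1 then (1:ℝ) else 0) with hwdef
    have hwsum : ∑ i, w i = 0 := by
      simp [hwdef, Finset.sum_sub_distrib]
    have hw0 : w i0 * w i0 = 1 := by simp [hwdef, h01]
    have hww : 0 < w ⬝ᵥ w := by
      have h := Finset.single_le_sum (f := fun j => w j * w j)
        (fun j _ => mul_self_nonneg (w j)) (Finset.mem_univ i0)
      simp only [hw0] at h
      have h2 : (1:ℝ) ≤ w ⬝ᵥ w := by simpa [dotProduct] using h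
      linarith
    set t := Real.sqrt (w ⬝ᵥ w) with ht
    have htpos : 0 < t := Real.sqrt_pos.mpr hww
    have ht2 : t * t = w ⬝ᵥ w := Real.mul_self_sqrt hww.le
    refine ⟨t⁻¹ • w, ?_, ?_⟩
    · show ∑ i, (t⁻¹ • w) i = 0
      simp only [Pi.smul_apply, smul_eq_mul]
      rw [← Finset.mul_sum, hwsum, mul_zero]
    · show (t⁻¹ • w) ⬝ᵥ (t⁻¹ • w) = 1
      rw [smul_dotProduct, dotProduct_smul, smul_eq_mul, smul_eq_mul, ← ht2]
      field_simp
  obtain ⟨vm, hvmS, hvmmin⟩ := hScomp.exists_isMinOn hne hcont_R.continuousOn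
  have hnR : (0:ℝ) < n := by positivity
  refine ⟨vm ⬝ᵥ (L *ᵥ vm), ?_, ?_⟩
  · rcases (hLnn vm).lt_or_eq with h | h
    · exact h
    · exfalso
      obtain ⟨cc, hcc⟩ := hLker vm (hker0 vm h.symm)
      have hsum := hvmS.1
      rw [hcc] at hsum
      rw [Finset.sum_const, Finset.card_univ, Fintype.card_fin, nsmul_eq_mul] at hsum
      have hcc0 : cc = 0 := by
        rcases mul_eq_zero.mp hsum with h2 | h2
        · exact absurd h2 hnR.ne'
        · exact h2
      have h3 := hvmS.2
      rw [hcc, hcc0] at h3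
      simp [dotProduct] at h3
  · intro v hv
    have hvvnn : 0 ≤ v ⬝ᵥ v :=
      Finset.sum_nonneg fun i _ => mul_self_nonneg (v i)
    by_cases hv0 : v ⬝ᵥ v = 0
    · have hvz : v = 0 := by
        funext i
        have h := (Finset.sum_eq_zero_iff_of_nonneg
          (fun j _ => mul_self_nonneg (v j))).mp hv0 i (Finset.mem_univ i)
        exact mul_self_eq_zero.mp h
      rw [hvz]
      simp
    · have hvv : 0 < v ⬝ᵥ v := lt_of_le_of_ne hvvnn (Ne.symm hv0)
      set t := Real.sqrt (v ⬝ᵥ v) with ht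
      have htpos : 0 < t := Real.sqrt_pos.mpr hvv
      have ht2 : t * t = v ⬝ᵥ v := Real.mul_self_sqrt hvv.le
      have hu : (t⁻¹ • v) ∈ S := by
        refine ⟨?_, ?_⟩
        · show ∑ i, (t⁻¹ • v) i = 0
          simp only [Pi.smul_apply, smul_eq_mul]
          rw [← Finset.mul_sum, hv, mul_zero]
        · show (t⁻¹ • v) ⬝ᵥ (t⁻¹ • v) = 1
          rw [smul_dotProduct, dotProduct_smul, smul_eq_mul, smul_eq_mul, ← ht2]
          field_simp
      have hmin := isMinOn_iff.mp hvmmin _ hu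
      rw [Matrix.mulVec_smul, smul_dotProduct, dotProduct_smul,
        smul_eq_mul, smul_eq_mul] at hmin
      have h1 : (vm ⬝ᵥ (L *ᵥ vm)) * (t * t) ≤ v ⬝ᵥ (L *ᵥ v) := by
        have h2 := mul_le_mul_of_nonneg_left hmin (mul_self_nonneg t)
        calc (vm ⬝ᵥ (L *ᵥ vm)) * (t * t) = (t * t) * (vm ⬝ᵥ (L *ᵥ vm)) := by ring
          _ ≤ (t * t) * (t⁻¹ * (t⁻¹ * (v ⬝ᵥ (L *ᵥ v)))) := h2
          _ = v ⬝ᵥ (L *ᵥ v) := by field_simp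
      rw [ht2] at h1
      exact h1

/-- **Convergence of the discretized Laplacian flow** (Proposition: Convergence of
Discretized Laplacian Flow). Under feasibility of the initial condition, connectivity
of the graph, and the bounds on the second derivatives, the iteration
`p⁺ = p - η L ∇f(p)` with `0 < η < 2/(θ λ_n)` converges asymptotically to the unique
minimizer `p*` of `f` subject to `1ᵀ p = c`. -/
theorem laplacian_flow_convergence
    (n : ℕ) (hn : 2 ≤ n)
    (L : Matrix (Fin n) (Fin n) ℝ)
    (hLsymm : L.IsSymm) (hLpsd : L.PosSemidef)
    (hL1 : L *ᵥ (fun _ => (1 : ℝ)) = 0)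
    (hLker : ∀ v : Fin n → ℝ, L *ᵥ v = 0 → ∃ c : ℝ, v = fun _ => c)
    -- λ_n : the largest eigenvalue of L
    (lamN : ℝ)
    (hlamN_eig : ∃ v : Fin n → ℝ, v ≠ 0 ∧ L *ᵥ v = lamN • v)
    (hlamN_max : ∀ v : Fin n → ℝ, v ⬝ᵥ (L *ᵥ v) ≤ lamN * (v ⬝ᵥ v))
    -- costs: twice differentiable with 0 < ω_i ≤ f_i'' ≤ θ_i
    (f : Fin n → ℝ → ℝ) (ω θi : Fin n → ℝ)
    (hf1 : ∀ i, Differentiable ℝ (f i))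
    (hf2 : ∀ i, Differentiable ℝ (deriv (f i)))
    (hω : ∀ i, 0 < ω i)
    (hbounds : ∀ i s, ω i ≤ deriv (deriv (f i)) s ∧ deriv (deriv (f i)) s ≤ θi i)
    (θ : ℝ) (hθ_ub : ∀ i, θi i ≤ θ) (hθ_mem : ∃ i, θ = θi i)
    (F : (Fin n → ℝ) → ℝ) (hF : F = fun p => ∑ i, f i (p i))
    (gradF : (Fin n → ℝ) → (Fin n → ℝ))
    (hgradF : gradF = fun p i => deriv (f i) (p i))
    -- p* : the unique minimizer of F subject to 1ᵀ p = c
    (c : ℝ) (pstar : Fin n → ℝ)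
    (hpstar_feas : ∑ i, pstar i = c)
    (hpstar_min : ∀ w : Fin n → ℝ, ∑ i, w i = c → F pstar ≤ F w)
    (hpstar_uniq : ∀ w : Fin n → ℝ, ∑ i, w i = c →
      (∀ u : Fin n → ℝ, ∑ i, u i = c → F w ≤ F u) → w = pstar)
    -- iteration
    (η : ℝ) (hη0 : 0 < η) (hη : η < 2 / (θ * lamN))
    (p : ℕ → Fin n → ℝ)
    (hp0 : ∑ i, p 0 i = c)
    (hiter : ∀ k, p (k + 1) = p k - η • (L *ᵥ gradF (p k))) :
    Tendsto p atTop (nhds pstar) := by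
  subst hF hgradF
  simp only at hpstar_min hiter
  -- basic positivity facts
  have hθpos : 0 < θ := by
    obtain ⟨j, hj⟩ := hθ_mem
    have h1 := (hbounds j 0).1
    have h2 := (hbounds j 0).2
    have h3 := hω j
    rw [hj]
    linarith
  have hθlam : 0 < θ * lamN := by
    by_contra h
    push_neg at h
    have h2 : 2 / (θ * lamN) ≤ 0 := div_nonpos_iff.mpr (Or.inl ⟨by norm_num, h⟩)
    linarith
  have hlamN : 0 < lamN := by nlinarith
  have hetl : η * (θ * lamN) < 2 := (lt_div_iff₀ hθlam).mp hη
  have hαpos : 0 < η - θ * η ^ 2 * lamN / 2 := by nlinarith [mul_lt_mul_of_pos_left hetl hη0]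
  set α := η - θ * η ^ 2 * lamN / 2 with hαdef
  -- μ : uniform strong convexity constant
  have hneF : (Finset.univ : Finset (Fin n)).Nonempty := ⟨⟨0, by omega⟩, Finset.mem_univ _⟩
  set μ := Finset.univ.inf' hneF ω with hμdef
  have hμpos : 0 < μ := (Finset.lt_inf'_iff hneF).mpr fun i _ => hω i
  have hμle : ∀ i, μ ≤ ω i := fun i => Finset.inf'_le ω (Finset.mem_univ i)
  -- per-coordinate Taylor bounds
  have hte : ∀ (i : Fin n) (a b : ℝ), f i b ≤ f i a + deriv (f i) a * (b - a) + θ / 2 * (b - a) ^ 2 :=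
    fun i a b => lf_taylor_upper (hf1 i) (hf2 i) (fun s => le_trans (hbounds i s).2 (hθ_ub i)) a b
  have htl : ∀ (i : Fin n) (a b : ℝ),
      f i a + deriv (f i) a * (b - a) + μ / 2 * (b - a) ^ 2 ≤ f i b :=
    fun i a b => lf_taylor_lower (hf1 i) (hf2 i)
      (fun s => le_trans (hμle i) (hbounds i s).1) a b
  -- vectorized Taylor bounds
  have hvec_up : ∀ x y : Fin n → ℝ, (∑ i, f i (y i)) ≤ (∑ i, f i (x i)) +
      (∑ i, deriv (f i) (x i) * (y i - x i)) + θ / 2 * ∑ i, (y i - x i) ^ 2 := by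
    intro x y
    rw [Finset.mul_sum, ← Finset.sum_add_distrib, ← Finset.sum_add_distrib]
    exact Finset.sum_le_sum fun i _ => hte i (x i) (y i)
  have hvec_low : ∀ x y : Fin n → ℝ, (∑ i, f i (x i)) +
      (∑ i, deriv (f i) (x i) * (y i - x i)) + μ / 2 * (∑ i, (y i - x i) ^ 2) ≤
      ∑ i, f i (y i) := by
    intro x y
    rw [Finset.mul_sum, ← Finset.sum_add_distrib, ← Finset.sum_add_distrib]
    exact Finset.sum_le_sum fun i _ => htl i (x i) (y i)
  -- matrix facts
  have hLsymm' : Lᵀ = L := hLsymm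
  set M := (open scoped MatrixOrder in CFC.sqrt L) with hMdef
  have hMsymm : Mᵀ = M := by
    have h : Mᴴ = M := (open scoped MatrixOrder in (CFC.sqrt_nonneg L).posSemidef.1)
    rwa [Matrix.conjTranspose_eq_transpose_of_trivial] at h
  have hMM : ∀ v : Fin n → ℝ, L *ᵥ v = M *ᵥ (M *ᵥ v) := by
    intro v
    rw [Matrix.mulVec_mulVec, (open scoped MatrixOrder in CFC.sqrt_mul_sqrt_self L hLpsd.nonneg)]
  have hdotL : ∀ v : Fin n → ℝ, v ⬝ᵥ (L *ᵥ v) = (M *ᵥ v) ⬝ᵥ (M *ᵥ v) := by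
    intro v
    rw [hMM v, symm_dot hMsymm]
  have hLnn : ∀ v : Fin n → ℝ, 0 ≤ v ⬝ᵥ (L *ᵥ v) := by
    intro v
    rw [hdotL]
    exact Finset.sum_nonneg fun i _ => mul_self_nonneg _
  have hker0 : ∀ v : Fin n → ℝ, v ⬝ᵥ (L *ᵥ v) = 0 → L *ᵥ v = 0 := by
    intro v hv
    apply (hLpsd.dotProduct_mulVec_zero_iff v).mp
    simpa using hv
  have hL2 : ∀ v : Fin n → ℝ, (L *ᵥ v) ⬝ᵥ (L *ᵥ v) ≤ lamN * (v ⬝ᵥ (L *ᵥ v)) := by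
    intro v
    have h := hlamN_max (M *ᵥ v)
    calc (L *ᵥ v) ⬝ᵥ (L *ᵥ v) = (M *ᵥ v) ⬝ᵥ (L *ᵥ (M *ᵥ v)) := by
          rw [hMM (M *ᵥ v), symm_dot hMsymm (M *ᵥ v) (M *ᵥ (M *ᵥ v)), ← hMM v]
      _ ≤ lamN * ((M *ᵥ v) ⬝ᵥ (M *ᵥ v)) := h
      _ = lamN * (v ⬝ᵥ (L *ᵥ v)) := by rw [← hdotL v]
  have hsumL : ∀ w : Fin n → ℝ, ∑ i, (L *ᵥ w) i = 0 := by
    intro w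
    have h := symm_dot hLsymm' (fun _ => (1:ℝ)) w
    rw [hL1] at h
    simpa [dotProduct] using h
  obtain ⟨m, hmpos, hmprop⟩ := lambda2_bound hn L hLnn hker0 hLker
  -- feasibility of the iterates
  have hfeas : ∀ k, ∑ i, p k i = c := by
    intro k
    induction k with
    | zero => exact hp0
    | succ k ih =>
      rw [hiter k]
      simp only [Pi.sub_apply, Pi.smul_apply, smul_eq_mul]
      rw [Finset.sum_sub_distrib, ← Finset.mul_sum, hsumL, mul_zero, sub_zero, ih]
  -- first-order optimality at pstar
  have hopt : ∀ v : Fin n → ℝ, (∑ i, v i) = 0 → (∑ i, deriv (f i) (pstar i) * v i) = 0 := by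
    intro v hv
    set φ : ℝ → ℝ := fun t => ∑ i, f i (pstar i + t * v i) with hφ
    have hder : HasDerivAt φ (∑ i, deriv (f i) (pstar i) * v i) 0 := by
      have h : ∀ i ∈ Finset.univ, HasDerivAt (fun t : ℝ => f i (pstar i + t * v i))
          (deriv (f i) (pstar i) * v i) 0 := by
        intro i _
        have h1 : HasDerivAt (fun t : ℝ => pstar i + t * v i) (v i) 0 := by
          simpa using ((hasDerivAt_id (0:ℝ)).mul_const (v i)).const_add (pstar i)
        have h2 := ((hf1 i) (pstar i + 0 * v i)).hasDerivAt
        have h3 := h2.comp 0 h1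
        simp only [zero_mul, add_zero] at h3
        exact h3
      exact HasDerivAt.fun_sum h
    have hmin : IsLocalMin φ 0 := by
      apply Filter.Eventually.of_forall
      intro t
      have hfeas2 : ∑ i, (pstar i + t * v i) = c := by
        rw [Finset.sum_add_distrib, ← Finset.mul_sum, hv, mul_zero, add_zero, hpstar_feas]
      have h := hpstar_min (fun i => pstar i + t * v i) hfeas2
      simpa [hφ] using h
    have h0 := hmin.deriv_eq_zero
    rwa [hder.deriv] at h0
  -- nonnegativity and strong-convexity lower bound on V
  have hV0 : ∀ k, 0 ≤ (∑ i, f i (p k i)) - ∑ i, f i (pstar i) := by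
    intro k
    have h := hpstar_min (p k) (hfeas k)
    linarith
  have hsum0 : ∀ k, ∑ i, (p k i - pstar i) = 0 := by
    intro k
    rw [Finset.sum_sub_distrib, hfeas k, hpstar_feas, sub_self]
  have hVlow : ∀ k, μ / 2 * (∑ i, (p k i - pstar i) ^ 2) ≤
      (∑ i, f i (p k i)) - ∑ i, f i (pstar i) := by
    intro k
    have h := hvec_low pstar (p k)
    have h2 := hopt (fun i => p k i - pstar i) (hsum0 k)
    have h3 : ∑ i, deriv (f i) (pstar i) * (p k i - pstar i) = 0 := h2
    linarith
  -- the gradient-like sequence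
  set G : ℕ → Fin n → ℝ := fun k i => deriv (f i) (p k i) with hGdef
  set q : ℕ → ℝ := fun k => G k ⬝ᵥ (L *ᵥ G k) with hqdef
  set V : ℕ → ℝ := fun k => (∑ i, f i (p k i)) - ∑ i, f i (pstar i) with hVdef
  -- descent inequality
  have hdiff : ∀ k i, p (k + 1) i - p k i = -(η * (L *ᵥ G k) i) := by
    intro k i
    rw [hiter k]
    simp [hGdef]
  have hdescent : ∀ k, V (k + 1) ≤ V k - α * q k := by
    intro k
    have h := hvec_up (p k) (p (k + 1))
    have e1 : ∑ i, deriv (f i) (p k i) * (p (k + 1) i - p k i) = -(η * q k) := by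
      calc ∑ i, deriv (f i) (p k i) * (p (k + 1) i - p k i)
          = ∑ i, -(η * (G k i * (L *ᵥ G k) i)) := by
            refine Finset.sum_congr rfl fun i _ => ?_
            rw [hdiff k i]
            simp only [hGdef]
            ring
        _ = -(η * ∑ i, G k i * (L *ᵥ G k) i) := by
            rw [Finset.sum_neg_distrib, ← Finset.mul_sum]
        _ = -(η * q k) := rfl
    have e2 : ∑ i, (p (k + 1) i - p k i) ^ 2 = η ^ 2 * ((L *ᵥ G k) ⬝ᵥ (L *ᵥ G k)) := by
      calc ∑ i, (p (k + 1) i - p k i) ^ 2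
          = ∑ i, η ^ 2 * ((L *ᵥ G k) i * (L *ᵥ G k) i) := by
            refine Finset.sum_congr rfl fun i _ => ?_
            rw [hdiff k i]
            ring
        _ = η ^ 2 * ∑ i, (L *ᵥ G k) i * (L *ᵥ G k) i := by rw [← Finset.mul_sum]
        _ = η ^ 2 * ((L *ᵥ G k) ⬝ᵥ (L *ᵥ G k)) := rfl
    rw [e1, e2] at h
    have h4 := hL2 (G k)
    have h5 : θ / 2 * (η ^ 2 * ((L *ᵥ G k) ⬝ᵥ (L *ᵥ G k))) ≤
        θ / 2 * (η ^ 2 * (lamN * q k)) := by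
      apply mul_le_mul_of_nonneg_left _ (by linarith : (0:ℝ) ≤ θ / 2)
      exact mul_le_mul_of_nonneg_left h4 (sq_nonneg η)
    simp only [hVdef, hαdef]
    linarith [h, h5]
  -- PL-type inequality : q k ≥ 2 μ m V k
  have hqV : ∀ k, 2 * μ * m * V k ≤ q k := by
    intro k
    set g : Fin n → ℝ := G k with hg
    set a : ℝ := (∑ i, g i) / n with ha
    set Pg : Fin n → ℝ := fun i => g i - a with hPg
    have hnR : (0:ℝ) < n := by exact_mod_cast (by omega : 0 < n)
    have hPgsum : ∑ i, Pg i = 0 := by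
      simp only [hPg]
      rw [Finset.sum_sub_distrib, Finset.sum_const, Finset.card_univ, Fintype.card_fin,
        nsmul_eq_mul, ha]
      field_simp
      ring
    have hgPg : g = Pg + a • (fun _ => (1:ℝ)) := by
      funext i
      simp [hPg]
    have hLPg : L *ᵥ g = L *ᵥ Pg := by
      rw [hgPg, Matrix.mulVec_add, Matrix.mulVec_smul, hL1]
      simp
    have hqPg : q k = Pg ⬝ᵥ (L *ᵥ Pg) := by
      show g ⬝ᵥ (L *ᵥ g) = Pg ⬝ᵥ (L *ᵥ Pg)
      rw [hLPg]
      have hexp : g ⬝ᵥ (L *ᵥ Pg) = Pg ⬝ᵥ (L *ᵥ Pg) + a * ∑ i, (L *ᵥ Pg) i := by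
        show (∑ i, g i * (L *ᵥ Pg) i) = (∑ i, Pg i * (L *ᵥ Pg) i) + a * ∑ i, (L *ᵥ Pg) i
        rw [Finset.mul_sum, ← Finset.sum_add_distrib]
        refine Finset.sum_congr rfl fun i _ => ?_
        simp only [hPg]
        ring
      rw [hexp, hsumL, mul_zero, add_zero]
    have hqB : m * (Pg ⬝ᵥ Pg) ≤ q k := by
      rw [hqPg]
      exact hmprop Pg hPgsum
    -- V k ≤ Pg ⬝ e - μ/2 E
    set e : Fin n → ℝ := fun i => p k i - pstar i with he
    have hesum : ∑ i, e i = 0 := hsum0 k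
    have hVup : V k ≤ (∑ i, Pg i * e i) - μ / 2 * ∑ i, e i * e i := by
      have h := hvec_low (p k) pstar
      have h1 : ∑ i, deriv (f i) (p k i) * (pstar i - p k i) = -(∑ i, g i * e i) := by
        rw [← Finset.sum_neg_distrib]
        refine Finset.sum_congr rfl fun i _ => ?_
        simp only [hg, hGdef, he]
        ring
      have h2 : ∑ i, (pstar i - p k i) ^ 2 = ∑ i, e i * e i := by
        refine Finset.sum_congr rfl fun i _ => ?_
        simp only [he]
        ring
      have h3 : ∑ i, g i * e i = (∑ i, Pg i * e i) + a * ∑ i, e i := by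
        rw [Finset.mul_sum, ← Finset.sum_add_distrib]
        refine Finset.sum_congr rfl fun i _ => ?_
        simp only [hPg]
        ring
      rw [h1, h2] at h
      rw [hesum, mul_zero, add_zero] at h3
      simp only [hVdef]
      rw [← h3]
      linarith
    have hsq : (0:ℝ) ≤ ∑ i, (Pg i - μ * e i) ^ 2 :=
      Finset.sum_nonneg fun i _ => sq_nonneg _
    have hexp2 : ∑ i, (Pg i - μ * e i) ^ 2 =
        (Pg ⬝ᵥ Pg) - 2 * μ * (∑ i, Pg i * e i) + μ ^ 2 * ∑ i, e i * e i := by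
      show ∑ i, (Pg i - μ * e i) ^ 2 =
        (∑ i, Pg i * Pg i) - 2 * μ * (∑ i, Pg i * e i) + μ ^ 2 * ∑ i, e i * e i
      rw [Finset.mul_sum, Finset.mul_sum, ← Finset.sum_sub_distrib, ← Finset.sum_add_distrib]
      refine Finset.sum_congr rfl fun i _ => ?_
      ring
    rw [hexp2] at hsq
    have hE : (0:ℝ) ≤ ∑ i, e i * e i := Finset.sum_nonneg fun i _ => mul_self_nonneg _
    -- 2 μ V k ≤ Pg ⬝ Pg
    have h2μV : 2 * μ * V k ≤ Pg ⬝ᵥ Pg := by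
      have hmul := mul_le_mul_of_nonneg_left hVup (by linarith : (0:ℝ) ≤ 2 * μ)
      have hring : 2 * μ * ((∑ i, Pg i * e i) - μ / 2 * ∑ i, e i * e i)
          = 2 * μ * (∑ i, Pg i * e i) - μ ^ 2 * ∑ i, e i * e i := by ring
      have h7 : 2 * μ * V k ≤ 2 * μ * (∑ i, Pg i * e i) - μ ^ 2 * ∑ i, e i * e i := by
        rw [← hring]; exact hmul
      linarith [hsq, h7]
    calc 2 * μ * m * V k = m * (2 * μ * V k) := by ring
      _ ≤ m * (Pg ⬝ᵥ Pg) := mul_le_mul_of_nonneg_left h2μV hmpos.le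
      _ ≤ q k := hqB
  -- geometric decay of V
  set r : ℝ := max (1 - α * (2 * μ * m)) 0 with hrdef
  have hr0 : 0 ≤ r := le_max_right _ _
  have hr1 : r < 1 := by
    apply max_lt _ one_pos
    have h := mul_pos hαpos (mul_pos (mul_pos (by norm_num : (0:ℝ) < 2) hμpos) hmpos)
    linarith
  have hVstep : ∀ k, V (k + 1) ≤ r * V k := by
    intro k
    have h1 := hdescent k
    have h2 := hqV k
    have h3 := hV0 k
    have h3' : 0 ≤ V k := h3
    have h4 : α * (2 * μ * m * V k) ≤ α * q k := mul_le_mul_of_nonneg_left h2 hαpos.le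
    have h6 : (1 - α * (2 * μ * m)) * V k = V k - α * (2 * μ * m * V k) := by ring
    calc V (k + 1) ≤ (1 - α * (2 * μ * m)) * V k := by linarith
      _ ≤ r * V k := mul_le_mul_of_nonneg_right (le_max_left _ _) h3'
  have hVbound : ∀ k, V k ≤ r ^ k * V 0 := by
    intro k
    induction k with
    | zero => simp
    | succ k ih =>
      calc V (k + 1) ≤ r * V k := hVstep k
        _ ≤ r * (r ^ k * V 0) := mul_le_mul_of_nonneg_left ih hr0
        _ = r ^ (k + 1) * V 0 := by ring
  have hVtend : Tendsto V atTop (nhds 0) := by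
    apply squeeze_zero hV0 hVbound
    have h := (tendsto_pow_atTop_nhds_zero_of_lt_one hr0 hr1).mul_const (V 0)
    simpa using h
  -- convergence of the squared error
  have hEtend : Tendsto (fun k => ∑ i, (p k i - pstar i) ^ 2) atTop (nhds 0) := by
    apply squeeze_zero (fun k => Finset.sum_nonneg fun i _ => sq_nonneg _) _
      (by simpa using hVtend.const_mul (2 / μ))
    intro k
    have h := hVlow k
    calc ∑ i, (p k i - pstar i) ^ 2
        = 2 / μ * (μ / 2 * ∑ i, (p k i - pstar i) ^ 2) := by field_simp
      _ ≤ 2 / μ * V k := mul_le_mul_of_nonneg_left h (div_pos (by norm_num) hμpos).le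
  -- coordinatewise convergence
  rw [tendsto_pi_nhds]
  intro i
  have hsq : Tendsto (fun k => (p k i - pstar i) ^ 2) atTop (nhds 0) := by
    apply squeeze_zero (fun k => sq_nonneg _) _ hEtend
    intro k
    exact Finset.single_le_sum (f := fun j => (p k j - pstar j) ^ 2)
      (fun j _ => sq_nonneg _) (Finset.mem_univ i)
  have habs : Tendsto (fun k => |p k i - pstar i|) atTop (nhds 0) := by
    have h := (Real.continuous_sqrt.tendsto 0).comp hsq
    simpa [Function.comp_def, Real.sqrt_sq_eq_abs] using h
  rw [← tendsto_sub_nhds_zero_iff]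
  rw [tendsto_zero_iff_norm_tendsto_zero]
  simpa [Real.norm_eq_abs] using habs
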